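/- For every natural number l, the Bell number B_l satisfies B_l > 4^l / 72, i.e., 72 · B_l > 4^l. -/

import Mathlib

open Finset

/-- The `l`-th Bell number: the number of partitions (equivalently, equivalence
relations) of a set with `l` elements. -/
noncomputable def bellNumber (l : ℕ) : ℕ := Nat.card (Setoid (Fin l))

instance setoidFinite (α : Type*) [Finite α] : Finite (Setoid α) :=
  Finite.of_injective (fun s => s.r) fun _ _ h => Setoid.ext fun x y =>
    iff_of_eq (congrFun (congrFun h x) y)

def setoidCongr {α β : Type*} (e : α ≃ β) : Setoid α ≃ Setoid β where
  toFun s := Setoid.comap e.symm s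
  invFun s := Setoid.comap e s
  left_inv s := Setoid.ext fun x y => by simp [Setoid.comap_rel]
  right_inv s := Setoid.ext fun x y => by simp [Setoid.comap_rel]

theorem bell_congr {α : Type*} (n : ℕ) (e : α ≃ Fin n) :
    Nat.card (Setoid α) = bellNumber n :=
  Nat.card_congr (setoidCongr e)

/-- Membership of an element of `Option (Fin n)` in the "new block": `none` together
with the elements of `S`. -/
def inB {n : ℕ} (S : Finset (Fin n)) : Option (Fin n) → Prop
  | none => True
  | some j => j ∈ S

/-- Extend a partition of the complement of `S` to a partition of `Option (Fin n)`
whose block containing `none` is exactly `{none} ∪ S`. -/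
def extSetoid {n : ℕ} (S : Finset (Fin n)) (P : Setoid {x : Fin n // x ∉ S}) :
    Setoid (Option (Fin n)) where
  r a b := (inB S a ∧ inB S b) ∨
    ∃ (j k : {x : Fin n // x ∉ S}), a = some j.1 ∧ b = some k.1 ∧ P.r j k
  iseqv := by
    constructor
    · intro a
      match a with
      | none => exact Or.inl ⟨trivial, trivial⟩
      | some j =>
        by_cases h : j ∈ S
        · exact Or.inl ⟨h, h⟩
        · exact Or.inr ⟨⟨j, h⟩, ⟨j, h⟩, rfl, rfl, P.refl _⟩
    · rintro a b (⟨ha, hb⟩ | ⟨j, k, ha, hb, h⟩)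
      · exact Or.inl ⟨hb, ha⟩
      · exact Or.inr ⟨k, j, hb, ha, P.symm h⟩
    · rintro a b c (⟨ha, hb⟩ | ⟨j, k, ha, hb, h⟩) (⟨hb', hc⟩ | ⟨j', k', hb', hc, h'⟩)
      · exact Or.inl ⟨ha, hc⟩
      · exfalso; rw [hb'] at hb; exact j'.2 hb
      · exfalso; rw [hb] at hb'; exact k.2 hb'
      · refine Or.inr ⟨j, k', ha, hc, P.trans h ?_⟩
        have : k = j' := Subtype.ext (by
          rw [hb] at hb'; exact Option.some_injective _ hb')
        rwa [this]

lemma extSetoid_none_some {n : ℕ} (S : Finset (Fin n)) (P : Setoid {x : Fin n // x ∉ S})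
    (j : Fin n) : (extSetoid S P).r none (some j) ↔ j ∈ S := by
  constructor
  · rintro (⟨_, hb⟩ | ⟨j', k', ha, _, _⟩)
    · exact hb
    · exact absurd ha (by simp)
  · intro h; exact Or.inl ⟨trivial, h⟩

lemma extSetoid_some_some {n : ℕ} (S : Finset (Fin n)) (P : Setoid {x : Fin n // x ∉ S})
    (j k : Fin n) (hj : j ∉ S) (hk : k ∉ S) :
    (extSetoid S P).r (some j) (some k) ↔ P.r ⟨j, hj⟩ ⟨k, hk⟩ := by
  constructor
  · rintro (⟨ha, _⟩ | ⟨j', k', ha, hb, h⟩)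
    · exact absurd ha hj
    · have hj' : j' = ⟨j, hj⟩ := Subtype.ext (Option.some_injective _ ha.symm)
      have hk' : k' = ⟨k, hk⟩ := Subtype.ext (Option.some_injective _ hb.symm)
      rwa [hj', hk'] at h
  · intro h; exact Or.inr ⟨⟨j, hj⟩, ⟨k, hk⟩, rfl, rfl, h⟩

lemma extSetoid_injective {n : ℕ} :
    Function.Injective (fun p : (Σ S : Finset (Fin n), Setoid {x : Fin n // x ∉ S}) =>
      extSetoid p.1 p.2) := by
  rintro ⟨S, P⟩ ⟨S', P'⟩ h
  simp only at h
  have hr : ∀ a b, (extSetoid S P).r a b ↔ (extSetoid S' P').r a b := fun a b => by rw [h]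
  have hS : S = S' := by
    ext j
    rw [← extSetoid_none_some S P j, hr, extSetoid_none_some]
  subst hS
  have hP : P = P' := by
    apply Setoid.ext
    rintro ⟨j, hj⟩ ⟨k, hk⟩
    rw [← extSetoid_some_some S P j k hj hk, hr, extSetoid_some_some]
  rw [hP]

/-- The key recurrence inequality: `B_{n+1} ≥ ∑_k C(n,k) B_{n-k}` (in fact equality). -/
theorem bell_rec (n : ℕ) :
    ∑ k ∈ Finset.range (n + 1), n.choose k * bellNumber (n - k) ≤ bellNumber (n + 1) := by
  classical
  haveI : ∀ S : Finset (Fin n), Fintype (Setoid {x : Fin n // x ∉ S}) :=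
    fun S => Fintype.ofFinite _
  have hfiber : ∀ S : Finset (Fin n),
      Nat.card (Setoid {x : Fin n // x ∉ S}) = bellNumber (n - S.card) := by
    intro S
    have hc : Fintype.card {x : Fin n // x ∉ S} = n - S.card := by
      simp [Fintype.card_subtype_compl]
    exact bell_congr _ (Fintype.equivFinOfCardEq hc)
  have key : Nat.card (Σ S : Finset (Fin n), Setoid {x : Fin n // x ∉ S})
      ≤ Nat.card (Setoid (Option (Fin n))) :=
    Nat.card_le_card_of_injective _ extSetoid_injective
  have h1 : Nat.card (Setoid (Option (Fin n))) = bellNumber (n + 1) :=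
    bell_congr _ (finSuccEquiv n).symm
  have h2 : Nat.card (Σ S : Finset (Fin n), Setoid {x : Fin n // x ∉ S})
      = ∑ k ∈ Finset.range (n + 1), n.choose k * bellNumber (n - k) := by
    rw [Nat.card_eq_fintype_card, Fintype.card_sigma]
    have : ∀ S : Finset (Fin n),
        Fintype.card (Setoid {x : Fin n // x ∉ S}) = bellNumber (n - S.card) := by
      intro S; rw [← Nat.card_eq_fintype_card, hfiber]
    simp_rw [this]
    rw [← powerset_univ, sum_powerset]
    simp only [card_univ, Fintype.card_fin]
    refine Finset.sum_congr rfl fun j hj => ?_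
    rw [sum_powersetCard j univ (fun k => bellNumber (n - k))]
    simp [card_univ, mul_comm, smul_eq_mul]
  rw [h1, h2] at key
  exact key

lemma bell_zero : bellNumber 0 = 1 := by
  haveI : Unique (Setoid (Fin 0)) :=
    { default := ⊥, uniq := fun s => Setoid.ext fun x => x.elim0 }
  simp [bellNumber, Nat.card_unique]

lemma bell_lb1 : 1 ≤ bellNumber 1 := by
  have h := bell_rec 0
  simpa [bell_zero] using h

lemma bell_lb2 : 2 ≤ bellNumber 2 := by
  have h := bell_rec 1
  have h1 := bell_lb1
  simp [Finset.sum_range_succ, bell_zero] at h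
  omega

lemma bell_lb3 : 5 ≤ bellNumber 3 := by
  have h := bell_rec 2
  have h1 := bell_lb1; have h2 := bell_lb2
  simp [Finset.sum_range_succ, bell_zero] at h
  omega

lemma bell_lb4 : 15 ≤ bellNumber 4 := by
  have h := bell_rec 3
  have h1 := bell_lb1; have h2 := bell_lb2; have h3 := bell_lb3
  simp [Finset.sum_range_succ, bell_zero] at h
  omega

lemma bell_lb5 : 52 ≤ bellNumber 5 := by
  have h := bell_rec 4
  have c1 : Nat.choose 4 2 = 6 := by decide
  have h1 := bell_lb1; have h2 := bell_lb2; have h3 := bell_lb3; have h4 := bell_lb4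
  simp [Finset.sum_range_succ, bell_zero, c1] at h
  omega

lemma bell_lb6 : 203 ≤ bellNumber 6 := by
  have h := bell_rec 5
  have c1 : Nat.choose 5 2 = 10 := by decide
  have c2 : Nat.choose 5 3 = 10 := by decide
  have h1 := bell_lb1; have h2 := bell_lb2; have h3 := bell_lb3; have h4 := bell_lb4
  have h5 := bell_lb5
  simp [Finset.sum_range_succ, bell_zero, c1, c2] at h
  omega

lemma bell_lb7 : 877 ≤ bellNumber 7 := by
  have h := bell_rec 6
  have c1 : Nat.choose 6 2 = 15 := by decide
  have c2 : Nat.choose 6 3 = 20 := by decide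
  have c3 : Nat.choose 6 4 = 15 := by decide
  have h1 := bell_lb1; have h2 := bell_lb2; have h3 := bell_lb3; have h4 := bell_lb4
  have h5 := bell_lb5; have h6 := bell_lb6
  simp [Finset.sum_range_succ, bell_zero, c1, c2, c3] at h
  omega

lemma pow54 (n : ℕ) (hn : 7 ≤ n) : 4 ^ (n + 1) ≤ 5 ^ n := by
  induction n with
  | zero => omega
  | succ m ih =>
    rcases Nat.lt_or_ge m 7 with h | h
    · have hm : m = 6 := by omega
      subst hm; norm_num
    · have h1 := ih h
      calc 4 ^ (m + 2) = 4 * 4 ^ (m + 1) := by ring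
        _ ≤ 4 * 5 ^ m := Nat.mul_le_mul_left 4 h1
        _ ≤ 5 * 5 ^ m := Nat.mul_le_mul_right _ (by norm_num)
        _ = 5 ^ (m + 1) := by ring

/-- The Bell number satisfies `B_l > 4^l / 72`, i.e. `72 · B_l > 4^l`. -/
theorem stmt_4 (l : ℕ) : 72 * bellNumber l > 4 ^ l := by
  induction l using Nat.strong_induction_on with
  | _ l IH =>
  rcases Nat.lt_or_ge l 8 with hl | hl
  · have h0 := bell_zero
    have h1 := bell_lb1; have h2 := bell_lb2; have h3 := bell_lb3; have h4 := bell_lb4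
    have h5 := bell_lb5; have h6 := bell_lb6; have h7 := bell_lb7
    interval_cases l <;> simp_all <;> omega
  · obtain ⟨n, rfl⟩ : ∃ n, l = n + 1 := ⟨l - 1, by omega⟩
    have hn : 7 ≤ n := by omega
    have hrec := bell_rec n
    have hsum : ∑ k ∈ Finset.range (n + 1), n.choose k * (4 ^ (n - k) + 1)
        ≤ ∑ k ∈ Finset.range (n + 1), n.choose k * (72 * bellNumber (n - k)) := by
      refine Finset.sum_le_sum fun k hk => Nat.mul_le_mul_left _ ?_
      have := IH (n - k) (by omega)
      omega
    have h5n : ∑ k ∈ Finset.range (n + 1), n.choose k * (4 ^ (n - k) + 1)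
        = 5 ^ n + 2 ^ n := by
      simp_rw [Nat.mul_add, Nat.mul_one, Finset.sum_add_distrib]
      congr 1
      · have := add_pow 1 4 n
        simpa [mul_comm] using this.symm
      · exact Nat.sum_range_choose n
    have hmul : ∑ k ∈ Finset.range (n + 1), n.choose k * (72 * bellNumber (n - k))
        = 72 * ∑ k ∈ Finset.range (n + 1), n.choose k * bellNumber (n - k) := by
      rw [Finset.mul_sum]; exact Finset.sum_congr rfl fun k _ => by ring
    have hp := pow54 n hn
    have h2n : 0 < 2 ^ n := Nat.pow_pos (by norm_num)
    have : 4 ^ (n + 1) < 72 * bellNumber (n + 1) := by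
      calc 4 ^ (n + 1) < 5 ^ n + 2 ^ n := by omega
        _ = ∑ k ∈ Finset.range (n + 1), n.choose k * (4 ^ (n - k) + 1) := h5n.symm
        _ ≤ ∑ k ∈ Finset.range (n + 1), n.choose k * (72 * bellNumber (n - k)) := hsum
        _ = 72 * ∑ k ∈ Finset.range (n + 1), n.choose k * bellNumber (n - k) := hmul
        _ ≤ 72 * bellNumber (n + 1) := Nat.mul_le_mul_left 72 hrec
    exact this
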